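/- Let n be an odd integer with n > 3. Any family of mutually orthogonal double diagonal latin squares of order n has at most n−3 members: if L₁, …, L_k are double diagonal latin squares of order n that are pairwise orthogonal, then k ≤ n−3. -/

import Mathlib

/-- A latin square of order `n`: each row map and each column map is injective. -/
def IsLatinSquare (n : ℕ) (L : Fin n × Fin n → Fin n) : Prop :=
  (∀ i : Fin n, Function.Injective (fun j => L (i, j))) ∧
  (∀ j : Fin n, Function.Injective (fun i => L (i, j)))

/-- A double diagonal latin square: a latin square whose main diagonal entries are
distinct and whose back diagonal entries (`L (i, n−1−i)`) are distinct. -/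
def IsDoubleDiagonalLatinSquare (n : ℕ) (L : Fin n × Fin n → Fin n) : Prop :=
  IsLatinSquare n L ∧ Function.Injective (fun i : Fin n => L (i, i)) ∧
    Function.Injective (fun i : Fin n => L (i, i.rev))

/-- Two latin squares are orthogonal if the superimposed pair map is injective. -/
def OrthogonalLatinSquares {n : ℕ} (L₁ L₂ : Fin n × Fin n → Fin n) : Prop :=
  Function.Injective (fun c => (L₁ c, L₂ c))

/-- For odd `n > 3`, any family of mutually orthogonal double diagonal latin squares
of order `n` has at most `n − 3` members. -/
theorem stmt_9 (n k : ℕ) (hodd : Odd n) (hn : 3 < n)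
    (L : Fin k → Fin n × Fin n → Fin n)
    (hdd : ∀ i, IsDoubleDiagonalLatinSquare n (L i))
    (horth : ∀ i j, i ≠ j → OrthogonalLatinSquares (L i) (L j)) :
    k ≤ n - 3 := by
  classical
  obtain ⟨t, ht⟩ := hodd
  have hn5 : 5 ≤ n := by omega
  -- normalize: conjugate each square so that its main diagonal is the identity
  have hdbij : ∀ m, Function.Bijective (fun i : Fin n => L m (i, i)) :=
    fun m => Finite.injective_iff_bijective.mp (hdd m).2.1
  let e : Fin k → Equiv.Perm (Fin n) := fun m => Equiv.ofBijective _ (hdbij m)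
  let M : Fin k → Fin n × Fin n → Fin n := fun m c => (e m).symm (L m c)
  have hMdiag : ∀ m i, M m (i, i) = i := fun m i => (e m).symm_apply_apply i
  have hMrow : ∀ m i, Function.Injective (fun j => M m (i, j)) :=
    fun m i => ((e m).symm.injective).comp ((hdd m).1.1 i)
  have hMcol : ∀ m j, Function.Injective (fun i => M m (i, j)) :=
    fun m j => ((e m).symm.injective).comp ((hdd m).1.2 j)
  have hMback : ∀ m, Function.Injective (fun i : Fin n => M m (i, i.rev)) :=
    fun m => ((e m).symm.injective).comp (hdd m).2.2
  have hMorth : ∀ m m', m ≠ m' → Function.Injective (fun c => (M m c, M m' c)) := by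
    intro m m' hne a b hab
    exact horth m m' hne (Prod.ext_iff.mpr
      ⟨(e m).symm.injective (congrArg Prod.fst hab),
       (e m').symm.injective (congrArg Prod.snd hab)⟩)
  let i0 : Fin n := ⟨0, by omega⟩
  let jn : Fin n := ⟨n - 1, by omega⟩
  let cc : Fin n := ⟨n / 2, by omega⟩
  have hrev0 : i0.rev = jn := by
    apply Fin.ext
    simp [Fin.val_rev, i0, jn]
  have hrevc : cc.rev = cc := by
    apply Fin.ext
    simp only [Fin.val_rev, cc]
    omega
  -- the corner values are distinct across the family
  have hfinj : Function.Injective (fun m => M m (i0, jn)) := by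
    intro m m' h
    by_contra hne
    simp only at h
    set v := M m (i0, jn) with hv
    have hcells : (i0, jn) = (v, v) := by
      apply hMorth m m' hne
      show (M m (i0, jn), M m' (i0, jn)) = (M m (v, v), M m' (v, v))
      rw [hMdiag, hMdiag, ← hv, ← h]
    have h1 : i0 = jn := by
      have ha := congrArg Prod.fst hcells
      have hb := congrArg Prod.snd hcells
      simp only at ha hb
      rw [ha, hb]
    have := congrArg Fin.val h1
    simp [i0, jn] at this
    omega
  -- corner value avoids 0, n-1 and the center symbol
  have hne0 : ∀ m, M m (i0, jn) ≠ i0 := by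
    intro m h
    have h2 : M m (i0, jn) = M m (i0, i0) := by rw [hMdiag]; exact h
    have := hMrow m i0 h2
    have := congrArg Fin.val this
    simp [i0, jn] at this
    omega
  have hneN : ∀ m, M m (i0, jn) ≠ jn := by
    intro m h
    have h2 : M m (i0, jn) = M m (jn, jn) := by rw [hMdiag]; exact h
    have := hMcol m jn h2
    have := congrArg Fin.val this
    simp [i0, jn] at this
    omega
  have hneC : ∀ m, M m (i0, jn) ≠ cc := by
    intro m h
    have h2 : M m (i0, i0.rev) = M m (cc, cc.rev) := by
      rw [hrev0, hrevc, hMdiag]; exact h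
    have := hMback m h2
    have := congrArg Fin.val this
    simp [i0, cc] at this
    omega
  -- count
  let s : Finset (Fin n) := Finset.univ \ {i0, jn, cc}
  have h3 : ({i0, jn, cc} : Finset (Fin n)).card = 3 := by
    rw [Finset.card_insert_of_notMem, Finset.card_insert_of_notMem,
      Finset.card_singleton]
    · simp only [Finset.mem_singleton, Fin.ext_iff, i0, jn, cc]
      omega
    · simp only [Finset.mem_insert, Finset.mem_singleton, Fin.ext_iff, i0, jn, cc]
      push_neg
      omega
  have hcard : s.card = n - 3 := by
    rw [Finset.card_sdiff_of_subset (Finset.subset_univ _), Finset.card_univ,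
      Fintype.card_fin, h3]
  have hle : (Finset.univ : Finset (Fin k)).card ≤ s.card := by
    apply Finset.card_le_card_of_injOn (fun m => M m (i0, jn))
    · intro m _
      simp only [s, Finset.mem_sdiff, Finset.mem_univ, true_and, Finset.mem_insert,
        Finset.mem_singleton]
      simp only [Finset.mem_coe, Finset.mem_sdiff, Finset.mem_univ, true_and, Finset.mem_insert,
        Finset.mem_singleton, not_or]
      exact ⟨hne0 m, hneN m, hneC m⟩
    · exact hfinj.injOn
  simpa [hcard] using hle
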